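/- Let q be a prime power. For every point Q ∈ ℙ²(F_q), there exists a homogeneous polynomial S ∈ F_q[x,y,z] of degree 3(q−1) such that for every nonzero vector v ∈ F_q³: S(v) = 1 if [v] = Q, and S(v) = 0 if [v] ≠ Q. -/

import Mathlib

open MvPolynomial

/-- The `F_q`-line in `ℙ²(F_q)` with (dual) coefficient vector `a`. -/
def projLine (F : Type*) [Field F] (a : Fin 3 → F) :
    Set (Projectivization F (Fin 3 → F)) :=
  {P | ∑ i, a i * P.rep i = 0}

/-- A set of points of `ℙ²(F_q)` is a blocking set if it meets every `F_q`-line. -/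
def IsBlockingSet (F : Type*) [Field F] (B : Set (Projectivization F (Fin 3 → F))) : Prop :=
  ∀ a : Fin 3 → F, a ≠ 0 → (B ∩ projLine F a).Nonempty

/-- The set of `F_q`-points of the member of the pencil `⟨P₁, P₂⟩` at `[s:t] ∈ ℙ¹(F_q)`. -/
def pencilMember (F : Type*) [Field F] (P₁ P₂ : MvPolynomial (Fin 3) F)
    (st : Projectivization F (Fin 2 → F)) :
    Set (Projectivization F (Fin 3 → F)) :=
  {P | st.rep 0 * eval P.rep P₁ + st.rep 1 * eval P.rep P₂ = 0}


noncomputable def linToPoly {F : Type*} [Field F] (f : (Fin 3 → F) →ₗ[F] F) :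
    MvPolynomial (Fin 3) F :=
  ∑ k, MvPolynomial.C (f (Pi.single k 1)) * X k

lemma linToPoly_eval {F : Type*} [Field F] (f : (Fin 3 → F) →ₗ[F] F) (v : Fin 3 → F) :
    eval v (linToPoly f) = f v := by
  have hv : v = ∑ k, v k • (Pi.single k 1 : Fin 3 → F) := by
    ext j; simp [Pi.single_apply]
  rw [linToPoly]
  conv_rhs => rw [hv]
  simp [map_sum, mul_comm]

lemma linToPoly_homog {F : Type*} [Field F] (f : (Fin 3 → F) →ₗ[F] F) :
    (linToPoly f).IsHomogeneous 1 := by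
  apply IsHomogeneous.sum
  intro k _
  exact (isHomogeneous_X F k).C_mul _

theorem stmt_3 (F : Type*) [Field F] [Fintype F]
    (Q : Projectivization F (Fin 3 → F)) :
    ∃ S : MvPolynomial (Fin 3) F,
      S.IsHomogeneous (3 * (Fintype.card F - 1)) ∧
      ∀ (v : Fin 3 → F) (hv : v ≠ 0),
        (Projectivization.mk F v hv = Q → eval v S = 1) ∧
        (Projectivization.mk F v hv ≠ Q → eval v S = 0) := by
  classical
  set q := Fintype.card F with hq
  set w := Q.rep with hwdef
  have hw : w ≠ 0 := Q.rep_nonzero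
  -- build basis with b' 0 = w
  have hli : LinearIndepOn F id ({w} : Set (Fin 3 → F)) :=
    LinearIndepOn.singleton (v := id) hw
  let b := Module.Basis.extend hli
  haveI : Fintype (hli.extend (Set.subset_univ _)) := FiniteDimensional.fintypeBasisIndex b
  have hwmem : w ∈ hli.extend (Set.subset_univ _) :=
    hli.subset_extend _ (Set.mem_singleton w)
  have hcard : Fintype.card (hli.extend (Set.subset_univ _)) = 3 := by
    rw [← Module.finrank_eq_card_basis b, Module.finrank_fin_fun]
  let e0 := Fintype.equivFinOfCardEq hcard
  let e := e0.trans (Equiv.swap (e0 ⟨w, hwmem⟩) 0)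
  let b' := b.reindex e
  have hb0 : b' 0 = w := by
    have he : e ⟨w, hwmem⟩ = 0 := by simp [e, Equiv.swap_apply_left]
    have : b' (e ⟨w, hwmem⟩) = b ⟨w, hwmem⟩ := by
      simp [b', Module.Basis.reindex_apply]
    rw [he] at this
    rw [this, Module.Basis.extend_apply_self]
  let c : Fin 3 → (Fin 3 → F) →ₗ[F] F := fun i => b'.coord i
  have hcw : ∀ i, c i w = if i = 0 then 1 else 0 := by
    intro i
    rw [← hb0]
    simp [c, Module.Basis.coord_apply, Finsupp.single_apply, eq_comm]
  let L : Fin 3 → MvPolynomial (Fin 3) F := fun i => (linToPoly (c i)) ^ (q - 1)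
  refine ⟨L 0 * ((L 0 - L 1) * (L 0 - L 2)), ?_, ?_⟩
  · have hL : ∀ i : Fin 3, (L i).IsHomogeneous (q - 1) := fun i => by
      simpa using (linToPoly_homog (c i)).pow (q - 1)
    have : (3 : ℕ) * (q - 1) = (q - 1) + ((q - 1) + (q - 1)) := by ring
    rw [this]
    exact (hL 0).mul (((hL 0).sub (hL 1)).mul ((hL 0).sub (hL 2)))
  · intro v hv
    have hevL : ∀ i, eval v (L i) = (c i v) ^ (q - 1) := fun i => by
      simp [L, linToPoly_eval]
    have hq1 : ∀ x : F, x ≠ 0 → x ^ (q - 1) = 1 := fun x hx =>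
      FiniteField.pow_card_sub_one_eq_one x hx
    constructor
    · intro hQv
      obtain ⟨a, ha⟩ := (Projectivization.mk_eq_mk_iff F v w hv hw).1
        (hQv.trans (Projectivization.mk_rep Q).symm)
      have hcv : ∀ i, c i v = a * (if i = 0 then 1 else 0) := by
        intro i
        rw [← ha, Units.smul_def, map_smul, hcw i, smul_eq_mul]
      have ha0 : (a : F) ≠ 0 := a.ne_zero
      have hz : (0 : F) ^ (q - 1) = 0 :=
        zero_pow (Nat.sub_ne_zero_of_lt Fintype.one_lt_card)
      simp [hevL, hcv, hq1 _ ha0, mul_pow, one_pow, hz]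
    · intro hQv
      have key : ¬ (c 0 v ≠ 0 ∧ c 1 v = 0 ∧ c 2 v = 0) := by
        rintro ⟨h0, h1, h2⟩
        apply hQv
        have hmk : Projectivization.mk F v hv = Projectivization.mk F w hw := by
          rw [Projectivization.mk_eq_mk_iff' F v w hv hw]
          refine ⟨c 0 v, ?_⟩
          have hrepr := b'.sum_repr v
          rw [Fin.sum_univ_three] at hrepr
          have e1 : b'.repr v 1 = 0 := h1
          have e2 : b'.repr v 2 = 0 := h2
          rw [e1, e2, zero_smul, zero_smul, add_zero, add_zero, hb0] at hrepr
          exact hrepr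
        exact hmk.trans (Projectivization.mk_rep Q)
      simp only [map_mul, map_sub, hevL]
      by_cases h0 : c 0 v = 0
      · simp [h0, zero_pow, (Nat.sub_ne_zero_of_lt (Fintype.one_lt_card (α := F)) : q - 1 ≠ 0)]
      · by_cases h1 : c 1 v = 0
        · by_cases h2 : c 2 v = 0
          · exact absurd ⟨h0, h1, h2⟩ key
          · rw [hq1 _ h0, hq1 _ h2]; ring
        · rw [hq1 _ h0, hq1 _ h1]; ring
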